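/- Fix y ∈ X. The function φ : (0,∞) → ℝ, α ↦ d²_{αC}(y) = α² d²_C(y/α), is convex, differentiable with φ'(α) = −2α⟨P_C(y/α), y/α − P_C(y/α)⟩ ≤ 0, hence decreasing and bounded below by 0; moreover lim_{α→0⁺} φ(α) = d²_{rec(C)}(y) and lim_{α→∞} φ(α) = d²_{clcone(C)}(y). -/

import Mathlib

open scoped Pointwise RealInnerProductSpace
open Metric Filter Topology
set_option linter.unusedSectionVars false

section Aux
variable {X : Type*} [NormedAddCommGroup X] [InnerProductSpace ℝ X] [CompleteSpace X]
variable {C : Set X} {P : X → X}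

lemma aux_infDist_eq (hP : ∀ x : X, P x ∈ C ∧ ∀ c ∈ C, dist x (P x) ≤ dist x c) (x : X) :
    infDist x C = dist x (P x) := by
  refine le_antisymm (infDist_le_dist_of_mem (hP x).1) ?_
  by_contra h
  push_neg at h
  obtain ⟨c, hc, hlt⟩ := (infDist_lt_iff ⟨_, (hP x).1⟩).mp h
  exact absurd ((hP x).2 c hc) (by linarith)

lemma aux_varineq (hconv : Convex ℝ C)
    (hP : ∀ x : X, P x ∈ C ∧ ∀ c ∈ C, dist x (P x) ≤ dist x c) (x : X) :
    ∀ c ∈ C, ⟪x - P x, c - P x⟫ ≤ 0 := by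
  haveI : Nonempty C := ⟨⟨_, (hP x).1⟩⟩
  have h : ‖x - P x‖ = ⨅ w : C, ‖x - w‖ := by
    refine le_antisymm ?_ ?_
    · refine le_ciInf fun w => ?_
      have := (hP x).2 w w.2
      simpa [dist_eq_norm] using this
    · exact ciInf_le_of_le ⟨0, fun _ ⟨w, h⟩ => h ▸ norm_nonneg _⟩ ⟨_, (hP x).1⟩ le_rfl
  exact (norm_eq_iInf_iff_real_inner_le_zero hconv (hP x).1).mp h

lemma aux_nonexpansive (hconv : Convex ℝ C)
    (hP : ∀ x : X, P x ∈ C ∧ ∀ c ∈ C, dist x (P x) ≤ dist x c) (x x' : X) :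
    ‖P x - P x'‖ ≤ ‖x - x'‖ := by
  have e1 := aux_varineq hconv hP x (P x') (hP x').1
  have e2 := aux_varineq hconv hP x' (P x) (hP x).1
  have h2' : (0:ℝ) ≤ ⟪x' - P x', P x' - P x⟫ := by
    have e : P x' - P x = -(P x - P x') := by abel
    rw [e, inner_neg_right]; linarith
  have e4 : ⟪x - x', P x' - P x⟫
      = ⟪x - P x, P x' - P x⟫ - ⟪x' - P x', P x' - P x⟫ - ⟪P x' - P x, P x' - P x⟫ := by
    have h : x - x' = (x - P x) - (x' - P x') - (P x' - P x) := by abel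
    rw [h, inner_sub_left, inner_sub_left]
  have hss : ⟪P x' - P x, P x' - P x⟫ = ‖P x' - P x‖ ^ 2 := real_inner_self_eq_norm_sq _
  have key : ‖P x' - P x‖ ^ 2 ≤ ⟪x - x', P x - P x'⟫ := by
    have e5 : ⟪x - x', P x - P x'⟫ = -⟪x - x', P x' - P x⟫ := by
      rw [← inner_neg_right]; congr 1; abel
    rw [e5, e4, hss]; linarith
  have hcs := real_inner_le_norm (x - x') (P x - P x')
  have hrev : ‖P x' - P x‖ = ‖P x - P x'‖ := norm_sub_rev _ _
  nlinarith [norm_nonneg (P x - P x'), norm_nonneg (x - x')]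

end Aux

section Aux2
variable {X : Type*} [NormedAddCommGroup X] [InnerProductSpace ℝ X] [CompleteSpace X]
variable {C : Set X} {P : X → X}

lemma aux_scale (hP : ∀ x : X, P x ∈ C ∧ ∀ c ∈ C, dist x (P x) ≤ dist x c)
    {α : ℝ} (hα : 0 < α) (y : X) :
    infDist y (α • C) = α * dist (α⁻¹ • y) (P (α⁻¹ • y)) := by
  set u := α⁻¹ • y with hu
  have hy : α • u = y := smul_inv_smul₀ hα.ne' y
  have hdist : ∀ c : X, dist y (α • c) = α * dist u c := by
    intro c
    rw [← hy, dist_smul₀, Real.norm_of_nonneg hα.le]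
  refine le_antisymm ?_ ?_
  · have hmem : α • P u ∈ α • C := Set.smul_mem_smul_set (hP u).1
    calc infDist y (α • C) ≤ dist y (α • P u) := infDist_le_dist_of_mem hmem
    _ = α * dist u (P u) := hdist _
  · by_contra h
    push_neg at h
    obtain ⟨z, hz, hlt⟩ := (infDist_lt_iff (⟨_, Set.smul_mem_smul_set (hP u).1⟩)).mp h
    obtain ⟨c, hc, rfl⟩ := hz
    rw [hdist] at hlt
    have := (hP u).2 c hc
    nlinarith

lemma aux_g_bound (hconv : Convex ℝ C)
    (hP : ∀ x : X, P x ∈ C ∧ ∀ c ∈ C, dist x (P x) ≤ dist x c) (x x' : X) :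
    |‖x' - P x'‖^2 - ‖x - P x‖^2 - 2*⟪x - P x, x' - x⟫| ≤ 5*‖x' - x‖^2 := by
  have hup : ‖x' - P x'‖^2 ≤ ‖x - P x‖^2 + 2*⟪x - P x, x' - x⟫ + ‖x' - x‖^2 := by
    have h1 : ‖x' - P x'‖ ≤ ‖x' - P x‖ := by
      have := (hP x').2 (P x) (hP x).1
      simpa [dist_eq_norm] using this
    have h2 : x' - P x = (x - P x) + (x' - x) := by abel
    have h3 : ‖x' - P x‖^2 = ‖x - P x‖^2 + 2*⟪x - P x, x' - x⟫ + ‖x' - x‖^2 := by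
      rw [h2, @norm_add_sq_real]
    nlinarith [norm_nonneg (x' - P x'), norm_nonneg (x' - P x)]
  have hlow : ‖x - P x‖^2 ≤ ‖x' - P x'‖^2 - 2*⟪x' - P x', x' - x⟫ + ‖x' - x‖^2 := by
    have h1 : ‖x - P x‖ ≤ ‖x - P x'‖ := by
      have := (hP x).2 (P x') (hP x').1
      simpa [dist_eq_norm] using this
    have h2 : x - P x' = (x' - P x') + -(x' - x) := by abel
    have h3 : ‖x - P x'‖^2 = ‖x' - P x'‖^2 - 2*⟪x' - P x', x' - x⟫ + ‖x' - x‖^2 := by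
      rw [h2, @norm_add_sq_real, inner_neg_right, norm_neg]; ring
    nlinarith [norm_nonneg (x - P x), norm_nonneg (x - P x')]
  have hdiff : |⟪x' - P x', x' - x⟫ - ⟪x - P x, x' - x⟫| ≤ 2*‖x' - x‖^2 := by
    have h1 : ⟪x' - P x', x' - x⟫ - ⟪x - P x, x' - x⟫ = ⟪(x' - P x') - (x - P x), x' - x⟫ :=
      (inner_sub_left _ _ _).symm
    have h2 : ‖(x' - P x') - (x - P x)‖ ≤ 2*‖x' - x‖ := by
      have e : (x' - P x') - (x - P x) = (x' - x) - (P x' - P x) := by abel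
      have := aux_nonexpansive hconv hP x' x
      calc ‖(x' - P x') - (x - P x)‖ = ‖(x' - x) - (P x' - P x)‖ := by rw [e]
        _ ≤ ‖x' - x‖ + ‖P x' - P x‖ := norm_sub_le _ _
        _ ≤ 2*‖x' - x‖ := by linarith
    have h3 := abs_real_inner_le_norm ((x' - P x') - (x - P x)) (x' - x)
    rw [h1]
    nlinarith [norm_nonneg (x' - x)]
  rw [abs_le] at hdiff ⊢
  constructor <;> nlinarith [sq_nonneg ‖x' - x‖]

lemma aux_hasFDeriv (hconv : Convex ℝ C)
    (hP : ∀ x : X, P x ∈ C ∧ ∀ c ∈ C, dist x (P x) ≤ dist x c) (x : X) :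
    HasFDerivAt (fun z => ‖z - P z‖^2) ((2:ℝ) • (innerSL ℝ (x - P x))) x := by
  rw [hasFDerivAt_iff_isLittleO_nhds_zero]
  have hbig : (fun h : X => ‖(x + h) - P (x + h)‖^2 - ‖x - P x‖^2
      - ((2:ℝ) • (innerSL ℝ (x - P x))) h) =O[nhds 0] fun h : X => ‖h‖^2 := by
    refine Asymptotics.IsBigO.of_bound 5 (Filter.Eventually.of_forall fun h => ?_)
    have := aux_g_bound hconv hP x (x + h)
    simp only [add_sub_cancel_left] at this
    simp only [ContinuousLinearMap.smul_apply, innerSL_apply_apply, smul_eq_mul, Real.norm_eq_abs]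
    rw [abs_of_nonneg (sq_nonneg ‖h‖)]
    exact this
  refine hbig.trans_isLittleO ?_
  rw [Asymptotics.isLittleO_iff]
  intro c hc
  filter_upwards [Metric.ball_mem_nhds (0:X) hc] with h hh
  simp only [Metric.mem_ball, dist_zero_right] at hh
  have h0 := norm_nonneg h
  rw [Real.norm_of_nonneg (sq_nonneg ‖h‖)]
  nlinarith

end Aux2

section Aux3
variable {X : Type*} [NormedAddCommGroup X] [InnerProductSpace ℝ X] [CompleteSpace X]
variable {C : Set X} {P : X → X}

lemma aux_hasDeriv (hconv : Convex ℝ C)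
    (hP : ∀ x : X, P x ∈ C ∧ ∀ c ∈ C, dist x (P x) ≤ dist x c) (y : X) {α : ℝ} (hα : 0 < α) :
    HasDerivAt (fun β : ℝ => β^2 * ‖β⁻¹ • y - P (β⁻¹ • y)‖^2)
      (-2 * α * ⟪P (α⁻¹ • y), α⁻¹ • y - P (α⁻¹ • y)⟫) α := by
  set u := α⁻¹ • y with hu
  have hy : α • u = y := smul_inv_smul₀ hα.ne' y
  have hc : HasDerivAt (fun β : ℝ => β⁻¹ • y) ((-(α^2)⁻¹) • y) α :=
    (hasDerivAt_inv hα.ne').smul_const y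
  have hg := (aux_hasFDeriv hconv hP u).comp_hasDerivAt α hc
  have hsq : HasDerivAt (fun β : ℝ => β^2) (2*α) α := by
    simpa using hasDerivAt_pow 2 α
  have hmul : HasDerivAt (fun β : ℝ => β^2 * ‖β⁻¹ • y - P (β⁻¹ • y)‖^2) _ α := hsq.mul hg
  convert hmul using 1
  simp only [ContinuousLinearMap.smul_apply, innerSL_apply_apply, smul_eq_mul, Function.comp]
  have e1 : ⟪u - P u, (-(α^2)⁻¹) • y⟫ = (-(α^2)⁻¹) * ⟪u - P u, y⟫ := real_inner_smul_right _ _ _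
  have e2 : ⟪u - P u, y⟫ = α * ⟪u - P u, u⟫ := by
    rw [← hy]; exact real_inner_smul_right _ _ _
  have e3 : ‖u - P u‖^2 = ⟪u - P u, u⟫ - ⟪u - P u, P u⟫ := by
    rw [← real_inner_self_eq_norm_sq, inner_sub_right]
  have e4 : ⟪P u, u - P u⟫ = ⟪u - P u, P u⟫ := real_inner_comm _ _
  rw [e4, e1, e2, e3]
  field_simp
  ring

end Aux3

section Aux4
variable {X : Type*} [NormedAddCommGroup X] [InnerProductSpace ℝ X] [CompleteSpace X]
variable {C : Set X} {P : X → X}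

lemma aux_smul_subset (hconv : Convex ℝ C) (h0 : (0:X) ∈ C) {a b : ℝ} (ha : 0 < a)
    (hab : a ≤ b) : a • C ⊆ b • C := by
  rintro z ⟨c, hc, rfl⟩
  have hb : 0 < b := ha.trans_le hab
  refine ⟨(a/b) • c, hconv.smul_mem_of_zero_mem h0 hc ⟨by positivity, div_le_one_of_le₀ hab hb.le⟩, ?_⟩
  show b • ((a/b) • c) = a • c
  rw [smul_smul, mul_div_cancel₀ _ hb.ne']

lemma aux_scale' (hP : ∀ x : X, P x ∈ C ∧ ∀ c ∈ C, dist x (P x) ≤ dist x c)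
    {α : ℝ} (hα : 0 < α) (y : X) :
    infDist y (α • C) = dist y (α • P (α⁻¹ • y)) := by
  rw [aux_scale hP hα y]
  set p := P (α⁻¹ • y) with hp
  conv_rhs => rw [← smul_inv_smul₀ hα.ne' y]
  rw [dist_smul₀, Real.norm_of_nonneg hα.le]

lemma aux_varineq_scaled (hconv : Convex ℝ C)
    (hP : ∀ x : X, P x ∈ C ∧ ∀ c ∈ C, dist x (P x) ≤ dist x c)
    {α : ℝ} (hα : 0 < α) (y : X) :
    ∀ z ∈ α • C, ⟪y - α • P (α⁻¹ • y), z - α • P (α⁻¹ • y)⟫ ≤ 0 := by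
  rintro z ⟨c, hc, rfl⟩
  set u := α⁻¹ • y with hu
  have hy : α • u = y := smul_inv_smul₀ hα.ne' y
  have h1 : y - α • P u = α • (u - P u) := by rw [← hy, ← smul_sub]
  have h2 : α • c - α • P u = α • (c - P u) := by rw [← smul_sub]
  rw [h1, h2, real_inner_smul_left, real_inner_smul_right]
  have := aux_varineq hconv hP u c hc
  nlinarith [mul_nonneg hα.le hα.le]

end Aux4

section Aux5
variable {X : Type*} [NormedAddCommGroup X] [InnerProductSpace ℝ X] [CompleteSpace X]
variable {C : Set X} {P : X → X}

lemma aux_anti (hconv : Convex ℝ C) (h0 : (0:X) ∈ C)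
    (hP : ∀ x : X, P x ∈ C ∧ ∀ c ∈ C, dist x (P x) ≤ dist x c) (y : X) :
    AntitoneOn (fun α : ℝ => (infDist y (α • C)) ^ 2) (Set.Ioi (0 : ℝ)) := by
  intro a ha b hb hab
  have h1 : infDist y (b • C) ≤ infDist y (a • C) :=
    infDist_le_infDist_of_subset (aux_smul_subset hconv h0 ha hab)
      ⟨_, Set.smul_mem_smul_set h0⟩
  simpa using pow_le_pow_left₀ infDist_nonneg h1 2

lemma aux_convexOn (hconv : Convex ℝ C) (h0 : (0:X) ∈ C)
    (hP : ∀ x : X, P x ∈ C ∧ ∀ c ∈ C, dist x (P x) ≤ dist x c) (y : X) :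
    ConvexOn ℝ (Set.Ioi (0 : ℝ)) (fun α : ℝ => (infDist y (α • C)) ^ 2) := by
  refine ⟨convex_Ioi 0, ?_⟩
  intro a ha b hb l m hl hm hsum
  simp only [smul_eq_mul]
  rw [Set.mem_Ioi] at ha hb
  set ca := P (a⁻¹ • y) with hca
  set cb := P (b⁻¹ • y) with hcb
  set γ := l * a + m * b with hγ
  have hγpos : 0 < γ := by
    rcases eq_or_lt_of_le hl with h | h
    · have hm1 : m = 1 := by linarith
      simp [hγ, ← h, hm1, hb]
    · nlinarith [mul_nonneg hm hb.le]
  set c := ((l*a)/γ) • ca + ((m*b)/γ) • cb with hc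
  have hcC : c ∈ C := by
    refine hconv (hP _).1 (hP _).1 (by positivity) (by positivity) ?_
    field_simp
    exact hγ.symm
  have hγc : γ • c = (l*a) • ca + (m*b) • cb := by
    rw [hc, smul_add, smul_smul, smul_smul, mul_div_cancel₀ _ hγpos.ne',
      mul_div_cancel₀ _ hγpos.ne']
  have hkey : y - γ • c = l • (y - a • ca) + m • (y - b • cb) := by
    have : l • (y - a • ca) + m • (y - b • cb)
        = (l + m) • y - ((l*a) • ca + (m*b) • cb) := by
      simp only [smul_sub, smul_smul, add_smul]; abel
    rw [this, hsum, one_smul, hγc]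
  have hA : infDist y (a • C) = ‖y - a • ca‖ := by
    rw [aux_scale' hP ha y, dist_eq_norm]
  have hB : infDist y (b • C) = ‖y - b • cb‖ := by
    rw [aux_scale' hP hb y, dist_eq_norm]
  have hle : infDist y (γ • C) ≤ ‖y - γ • c‖ := by
    have : γ • c ∈ γ • C := Set.smul_mem_smul_set hcC
    simpa [dist_eq_norm] using infDist_le_dist_of_mem this
  have hnorm : ‖y - γ • c‖ ≤ l * ‖y - a • ca‖ + m * ‖y - b • cb‖ := by
    rw [hkey]
    calc ‖l • (y - a • ca) + m • (y - b • cb)‖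
        ≤ ‖l • (y - a • ca)‖ + ‖m • (y - b • cb)‖ := norm_add_le _ _
      _ = l * ‖y - a • ca‖ + m * ‖y - b • cb‖ := by
          rw [norm_smul, norm_smul, Real.norm_of_nonneg hl, Real.norm_of_nonneg hm]
  have hsq : (l * ‖y - a • ca‖ + m * ‖y - b • cb‖)^2
      ≤ l * ‖y - a • ca‖^2 + m * ‖y - b • cb‖^2 := by
    nlinarith [sq_nonneg (‖y - a • ca‖ - ‖y - b • cb‖), mul_nonneg hl hm,
      norm_nonneg (y - a • ca), norm_nonneg (y - b • cb)]
  have h0' : (0:ℝ) ≤ infDist y (γ • C) := infDist_nonneg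
  have h1 : (infDist y (γ • C))^2 ≤ (l * ‖y - a • ca‖ + m * ‖y - b • cb‖)^2 := by
    apply pow_le_pow_left₀ h0'
    exact hle.trans hnorm
  rw [hA, hB]
  exact h1.trans hsq

end Aux5

section Aux6
variable {X : Type*} [NormedAddCommGroup X] [InnerProductSpace ℝ X] [CompleteSpace X]
variable {C : Set X} {P : X → X}

lemma aux_tendsto_top (hconv : Convex ℝ C) (h0 : (0:X) ∈ C)
    (hP : ∀ x : X, P x ∈ C ∧ ∀ c ∈ C, dist x (P x) ≤ dist x c) (y : X) :
    Tendsto (fun α : ℝ => (infDist y (α • C)) ^ 2) atTop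
      (nhds ((infDist y (closure (⋃ ρ ∈ Set.Ioi (0 : ℝ), ρ • C))) ^ 2)) := by
  set U := ⋃ ρ ∈ Set.Ioi (0 : ℝ), ρ • C with hU
  set E := infDist y (closure U) with hE
  have h01 : (0:X) ∈ (1:ℝ) • C := by simpa using Set.smul_mem_smul_set (a := (1:ℝ)) h0
  have hUne : U.Nonempty := ⟨(0:X), Set.mem_biUnion (Set.mem_Ioi.2 one_pos) h01⟩
  have hEU : infDist y U = E := (infDist_closure).symm
  have base : Tendsto (fun α : ℝ => infDist y (α • C)) atTop (𝓝 E) := by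
    rw [Metric.tendsto_atTop]
    intro ε hε
    have hlt : infDist y U < E + ε := by rw [hEU]; linarith
    obtain ⟨z, hz, hzd⟩ := (infDist_lt_iff hUne).mp hlt
    obtain ⟨ρ, hρ, hzρ⟩ := Set.mem_iUnion₂.mp hz
    refine ⟨max ρ 1, fun α hα => ?_⟩
    have hα1 : (1:ℝ) ≤ α := le_trans (le_max_right _ _) hα
    have hαpos : 0 < α := lt_of_lt_of_le one_pos hα1
    have hsub1 : ρ • C ⊆ α • C := aux_smul_subset hconv h0 hρ (le_trans (le_max_left _ _) hα)
    have hup : infDist y (α • C) ≤ dist y z := infDist_le_dist_of_mem (hsub1 hzρ)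
    have hlow : E ≤ infDist y (α • C) := by
      rw [hE]
      have hsub2 : α • C ⊆ closure U := by
        intro w hw
        exact subset_closure (Set.mem_biUnion (Set.mem_Ioi.2 hαpos) hw)
      exact infDist_le_infDist_of_subset hsub2 ⟨_, Set.smul_mem_smul_set h0⟩
    rw [Real.dist_eq, abs_lt]
    constructor <;> linarith
  simpa using base.pow 2

end Aux6

section Aux7
variable {X : Type*} [NormedAddCommGroup X] [InnerProductSpace ℝ X] [CompleteSpace X]
variable {C : Set X} {P : X → X}

lemma aux_tendsto_zero (hcl : IsClosed C) (hconv : Convex ℝ C) (h0 : (0:X) ∈ C)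
    (hP : ∀ x : X, P x ∈ C ∧ ∀ c ∈ C, dist x (P x) ≤ dist x c) (y : X) :
    Tendsto (fun α : ℝ => (infDist y (α • C)) ^ 2) (nhdsWithin 0 (Set.Ioi 0))
      (nhds ((infDist y {v : X | ∀ c ∈ C, v + c ∈ C}) ^ 2)) := by
  set R := {v : X | ∀ c ∈ C, v + c ∈ C} with hR
  have hR0 : (0:X) ∈ R := fun c hc => by simpa using hc
  have hRsub : ∀ {α : ℝ}, 0 < α → R ⊆ α • C := by
    intro α hα v hv
    have hn : ∀ n : ℕ, (n:ℝ) • v ∈ C := by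
      intro n; induction n with
      | zero => simpa using h0
      | succ n ih =>
        have h1 := hv _ ih
        have e : ((n+1:ℕ):ℝ) • v = v + (n:ℝ) • v := by
          push_cast; rw [add_smul, one_smul]; abel
        rw [e]; exact h1
    have ht : ∀ t : ℝ, 0 ≤ t → t • v ∈ C := by
      intro t htn
      obtain ⟨n, hn'⟩ := exists_nat_ge t
      rcases Nat.eq_zero_or_pos n with h | h
      · have : t = 0 := le_antisymm (by simpa [h] using hn') htn
        simpa [this] using h0
      · have hnpos : (0:ℝ) < n := by exact_mod_cast h
        have h2 : (t / n) • ((n:ℝ) • v) ∈ C :=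
          hconv.smul_mem_of_zero_mem h0 (hn n)
            ⟨by positivity, div_le_one_of_le₀ hn' hnpos.le⟩
        rwa [smul_smul, div_mul_cancel₀ _ hnpos.ne'] at h2
    exact ⟨α⁻¹ • v, ht _ (by positivity),
      by show α • (α⁻¹ • v) = v; rw [smul_inv_smul₀ hα.ne']⟩
  set D := infDist y R with hD
  have hRne : R.Nonempty := ⟨0, hR0⟩
  have hupper : ∀ {α : ℝ}, 0 < α → infDist y (α • C) ≤ D :=
    fun hα => infDist_le_infDist_of_subset (hRsub hα) hRne
  set a : ℕ → ℝ := fun n => ((n:ℝ)+1)⁻¹ with ha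
  have hapos : ∀ n, 0 < a n := fun n => by positivity
  set x : ℕ → X := fun n => (a n) • P ((a n)⁻¹ • y) with hx
  set d : ℕ → ℝ := fun n => infDist y ((a n) • C) with hd
  have hdx : ∀ n, d n = dist y (x n) := fun n => aux_scale' hP (hapos n) y
  have hamono : ∀ {n m : ℕ}, n ≤ m → a m ≤ a n := by
    intro n m h
    have : (n:ℝ) + 1 ≤ (m:ℝ) + 1 := by
      have := (Nat.cast_le (α := ℝ)).2 h; linarith
    exact inv_anti₀ (by positivity) this
  have hdmono : Monotone d := by
    intro n m h
    exact infDist_le_infDist_of_subset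
      (aux_smul_subset hconv h0 (hapos m) (hamono h)) ⟨_, Set.smul_mem_smul_set h0⟩
  have hdle : ∀ n, d n ≤ D := fun n => hupper (hapos n)
  have hbdd : BddAbove (Set.range d) := ⟨D, by rintro _ ⟨n, rfl⟩; exact hdle n⟩
  set L := ⨆ n, d n with hL
  have hdL : ∀ n, d n ≤ L := fun n => le_ciSup hbdd n
  have htd : Tendsto d atTop (𝓝 L) := tendsto_atTop_ciSup hdmono hbdd
  have hLD : L ≤ D := ciSup_le hdle
  have hquad : ∀ {n m : ℕ}, n ≤ m → ‖x m - x n‖^2 ≤ d m ^2 - d n ^2 := by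
    intro n m h
    have hmem : x m ∈ (a n) • C :=
      aux_smul_subset hconv h0 (hapos m) (hamono h) (Set.smul_mem_smul_set (hP _).1)
    have hvi := aux_varineq_scaled hconv hP (hapos n) y (x m) hmem
    have hexp : ‖y - x m‖^2 = ‖y - x n‖^2 - 2*⟪y - x n, x m - x n⟫ + ‖x m - x n‖^2 := by
      have e : y - x m = (y - x n) + -(x m - x n) := by abel
      rw [e, norm_add_sq_real, inner_neg_right, norm_neg]; ring
    have h1 : d m ^2 = ‖y - x m‖^2 := by rw [hdx m, dist_eq_norm]
    have h2 : d n ^2 = ‖y - x n‖^2 := by rw [hdx n, dist_eq_norm]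
    linarith
  have hcauchy : CauchySeq x := by
    rw [Metric.cauchySeq_iff']
    intro ε hε
    have hL2 : Tendsto (fun n => d n ^2) atTop (𝓝 (L^2)) := htd.pow 2
    have hev : ∀ᶠ n in atTop, L^2 - ε^2 < d n ^2 :=
      hL2 (Ioi_mem_nhds (by nlinarith))
    obtain ⟨N, hN⟩ := hev.exists
    refine ⟨N, fun n hn => ?_⟩
    have hq := hquad hn
    have hb : dist (x n) (x N) ^2 < ε^2 := by
      rw [dist_eq_norm]
      have h3 := hdL n
      have h4 := infDist_nonneg (s := (a n) • C) (x := y)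
      nlinarith
    exact lt_of_pow_lt_pow_left₀ 2 hε.le hb
  obtain ⟨xs, hxs⟩ := cauchySeq_tendsto_of_complete hcauchy
  have hxsmem : ∀ {α : ℝ}, 0 < α → xs ∈ α • C := by
    intro α hα
    have hclosed : IsClosed (α • C) := hcl.smul_of_ne_zero hα.ne'
    refine hclosed.mem_of_tendsto hxs ?_
    obtain ⟨N, hN⟩ := exists_nat_ge α⁻¹
    filter_upwards [eventually_ge_atTop N] with n hn
    have h1 : a n ≤ α := by
      have h2 : α⁻¹ ≤ (n:ℝ)+1 := by
        refine hN.trans ?_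
        have := (Nat.cast_le (α := ℝ)).2 hn; linarith
      have h3 := inv_anti₀ (by positivity : (0:ℝ) < α⁻¹) h2
      rwa [inv_inv] at h3
    exact aux_smul_subset hconv h0 (hapos n) h1 (Set.smul_mem_smul_set (hP _).1)
  have hxsR : xs ∈ R := by
    intro c hc
    have hsx : ∀ s : ℝ, 0 < s → s • xs ∈ C := by
      intro s hs
      obtain ⟨c', hc', he⟩ := hxsmem (show (0:ℝ) < s⁻¹ by positivity)
      rw [← he, smul_inv_smul₀ hs.ne']
      exact hc'
    have hzC : ∀ k : ℕ, (1 - ((k:ℝ)+1)⁻¹) • c + xs ∈ C := by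
      intro k
      have hk : (0:ℝ) < (k:ℝ)+1 := by positivity
      have hinv1 : ((k:ℝ)+1)⁻¹ ≤ 1 := by
        rw [inv_le_one_iff₀]; right; linarith
      have hmem := hconv (a := 1 - ((k:ℝ)+1)⁻¹) (b := ((k:ℝ)+1)⁻¹) hc
        (hsx ((k:ℝ)+1) hk) (by linarith) (by positivity) (by ring)
      rwa [smul_smul, inv_mul_cancel₀ hk.ne', one_smul] at hmem
    have h1 : Tendsto (fun k : ℕ => 1 - ((k:ℝ)+1)⁻¹) atTop (𝓝 1) := by
      have h2 := tendsto_one_div_add_atTop_nhds_zero_nat (𝕜 := ℝ)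
      have h3 : Tendsto (fun k : ℕ => ((k:ℝ)+1)⁻¹) atTop (𝓝 0) := by
        simpa [one_div] using h2
      simpa using tendsto_const_nhds.sub h3
    have hzt : Tendsto (fun k : ℕ => (1 - ((k:ℝ)+1)⁻¹) • c + xs) atTop (𝓝 (c + xs)) := by
      have h4 := (h1.smul_const c).add_const xs
      rwa [one_smul] at h4
    have h5 := hcl.mem_of_tendsto hzt (Eventually.of_forall hzC)
    rwa [add_comm] at h5
  have hDL : D ≤ L := by
    have h1 : Tendsto (fun n => dist y (x n)) atTop (𝓝 (dist y xs)) :=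
      tendsto_const_nhds.dist hxs
    have h2 : Tendsto d atTop (𝓝 (dist y xs)) :=
      h1.congr (fun n => (hdx n).symm)
    have hLd : L = dist y xs := tendsto_nhds_unique htd h2
    rw [hLd, hD]
    exact infDist_le_dist_of_mem hxsR
  have hLDeq : L = D := le_antisymm hLD hDL
  rw [Metric.tendsto_nhdsWithin_nhds]
  intro ε hε
  have hL2 : Tendsto (fun n => d n ^2) atTop (𝓝 (D^2)) := by
    rw [← hLDeq]; exact htd.pow 2
  have hev : ∀ᶠ n in atTop, D^2 - ε < d n ^2 := hL2 (Ioi_mem_nhds (by linarith))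
  obtain ⟨N, hN⟩ := hev.exists
  refine ⟨a N, hapos N, ?_⟩
  intro β hβ hdist
  have hβ0 : (0:ℝ) < β := hβ
  have hβle : β ≤ a N := by
    rw [Real.dist_eq, sub_zero, abs_of_pos hβ0] at hdist
    exact hdist.le
  have hmono := aux_anti hconv h0 hP y hβ (Set.mem_Ioi.2 (hapos N)) hβle
  have hup2 : (infDist y (β • C))^2 ≤ D^2 :=
    pow_le_pow_left₀ infDist_nonneg (hupper hβ0) 2
  rw [Real.dist_eq, abs_lt]
  constructor <;> simp only at hmono <;> nlinarith [hmono]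

end Aux7

theorem scaled_squared_distance_properties
    {X : Type*} [NormedAddCommGroup X] [InnerProductSpace ℝ X] [CompleteSpace X]
    (C : Set X) (hcl : IsClosed C) (hconv : Convex ℝ C) (h0 : (0 : X) ∈ C)
    (y : X) (P : X → X)
    (hP : ∀ x : X, P x ∈ C ∧ ∀ c ∈ C, dist x (P x) ≤ dist x c) :
    (∀ α : ℝ, 0 < α →
        (infDist y (α • C)) ^ 2 = α ^ 2 * (infDist (α⁻¹ • y) C) ^ 2) ∧
      ConvexOn ℝ (Set.Ioi (0 : ℝ)) (fun α : ℝ => (infDist y (α • C)) ^ 2) ∧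
      (∀ α : ℝ, 0 < α →
        HasDerivAt (fun α : ℝ => (infDist y (α • C)) ^ 2)
          (-2 * α * ⟪P (α⁻¹ • y), α⁻¹ • y - P (α⁻¹ • y)⟫) α ∧
        -2 * α * ⟪P (α⁻¹ • y), α⁻¹ • y - P (α⁻¹ • y)⟫ ≤ 0) ∧
      AntitoneOn (fun α : ℝ => (infDist y (α • C)) ^ 2) (Set.Ioi (0 : ℝ)) ∧
      (∀ α : ℝ, 0 < α → 0 ≤ (infDist y (α • C)) ^ 2) ∧
      Tendsto (fun α : ℝ => (infDist y (α • C)) ^ 2) (nhdsWithin 0 (Set.Ioi 0))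
        (nhds ((infDist y {v : X | ∀ c ∈ C, v + c ∈ C}) ^ 2)) ∧
      Tendsto (fun α : ℝ => (infDist y (α • C)) ^ 2) atTop
        (nhds ((infDist y (closure (⋃ ρ ∈ Set.Ioi (0 : ℝ), ρ • C))) ^ 2)) := by
  refine ⟨?_, aux_convexOn hconv h0 hP y, ?_, aux_anti hconv h0 hP y,
    fun α hα => sq_nonneg _, aux_tendsto_zero hcl hconv h0 hP y,
    aux_tendsto_top hconv h0 hP y⟩
  · intro α hα
    rw [aux_scale hP hα y, aux_infDist_eq hP (α⁻¹ • y), mul_pow]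
  · intro α hα
    constructor
    · refine (aux_hasDeriv hconv hP y hα).congr_of_eventuallyEq ?_
      filter_upwards [Ioi_mem_nhds hα] with β hβ
      rw [aux_scale hP hβ y, mul_pow, dist_eq_norm]
    · have h1 := aux_varineq hconv hP (α⁻¹ • y) 0 h0
      rw [zero_sub, inner_neg_right] at h1
      have h2 : 0 ≤ ⟪P (α⁻¹ • y), α⁻¹ • y - P (α⁻¹ • y)⟫ := by
        rw [real_inner_comm]; linarith
      nlinarith
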